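/- Let F_1, F_2 ⊆ [r] with F_1 ∪ F_2 = [r], and set r_1 = |F_1 ∩ F_2|, r_2 = |F_1 \ F_2|, r_3 = |F_2 \ F_1|. Then the number of vertices of the Minkowski sum P = Δ_{F_1} + Δ_{F_2} is r_1 r_2 + r_1 r_3 + r_2 r_3 + r_1. -/
import Mathlib

open Pointwise

def stdv (r : ℕ) (i : Fin r) : Fin r → ℝ := fun j => if i = j then 1 else 0

lemma stdv_add_eq_iff {r : ℕ} {a b c d : Fin r} :
    stdv r a + stdv r b = stdv r c + stdv r d ↔ (a = c ∧ b = d) ∨ (a = d ∧ b = c) := by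
  constructor
  · intro h
    by_cases hac : a = c
    · subst hac
      have hbd := add_left_cancel h
      have h2 := congrFun hbd b
      simp only [stdv] at h2
      rw [if_pos trivial] at h2
      by_cases hdb : d = b
      · exact Or.inl ⟨rfl, hdb.symm⟩
      · rw [if_neg hdb] at h2; norm_num at h2
    · have hA := congrFun h a
      simp only [stdv, Pi.add_apply] at hA
      rw [if_pos trivial, if_neg (fun h' : c = a => hac h'.symm)] at hA
      by_cases hba : b = a
      · rw [if_pos hba] at hA
        by_cases hda : d = a
        · rw [if_pos hda] at hA; norm_num at hA
        · rw [if_neg hda] at hA; norm_num at hA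
      · rw [if_neg hba] at hA
        by_cases hda : d = a
        · have hB := congrFun h b
          simp only [stdv, Pi.add_apply] at hB
          have hab' : ¬ a = b := fun h' => hba h'.symm
          have hdb : ¬ d = b := fun h' => hba (hda ▸ h' : (a:Fin r) = b).symm
          rw [if_pos trivial, if_neg hab', if_neg hdb] at hB
          by_cases hcb : c = b
          · exact Or.inr ⟨hda.symm, hcb.symm⟩
          · rw [if_neg hcb] at hB; norm_num at hB
        · rw [if_neg hda] at hA; norm_num at hA
  · rintro (⟨rfl, rfl⟩ | ⟨rfl, rfl⟩)
    · rfl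
    · exact add_comm _ _

lemma extreme_of_strict_max {E : Type*} [AddCommGroup E] [Module ℝ E] {S : Set E} {v : E}
    (ℓ : E →ₗ[ℝ] ℝ) (hv : v ∈ S) (hmax : ∀ w ∈ S, w ≠ v → ℓ w < ℓ v) :
    v ∈ Set.extremePoints ℝ (convexHull ℝ S) := by
  have hle : ∀ x ∈ convexHull ℝ S, ℓ x ≤ ℓ v := by
    intro x hx
    have hhalf : Convex ℝ {y : E | ℓ y ≤ ℓ v} :=
      convex_halfSpace_le (LinearMap.isLinear ℓ) (ℓ v)
    refine convexHull_min (fun w hw => ?_) hhalf hx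
    rcases eq_or_ne w v with rfl | hne
    · exact Set.mem_setOf.mpr le_rfl
    · exact Set.mem_setOf.mpr (hmax w hw hne).le
  have heq : ∀ x ∈ convexHull ℝ S, ℓ x = ℓ v → x = v := by
    intro x hx hℓ
    rw [mem_convexHull_iff_exists_fintype] at hx
    obtain ⟨ι, _inst, w, z, hw₀, hw₁, hz, hxsum⟩ := hx
    have hterm : ∀ i ∈ Finset.univ (α := ι), w i * (ℓ v - ℓ (z i)) = 0 := by
      rw [← Finset.sum_eq_zero_iff_of_nonneg]
      · have h1 : ∑ i, w i * ℓ (z i) = ℓ v := by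
          rw [← hℓ, ← hxsum, map_sum]
          simp [smul_eq_mul]
        have h2 : ∑ i, w i * ℓ v = ℓ v := by
          rw [← Finset.sum_mul, hw₁, one_mul]
        calc ∑ i, w i * (ℓ v - ℓ (z i))
            = (∑ i, w i * ℓ v) - ∑ i, w i * ℓ (z i) := by
              rw [← Finset.sum_sub_distrib]; congr 1; ext i; ring
          _ = 0 := by rw [h1, h2, sub_self]
      · intro i _
        apply mul_nonneg (hw₀ i)
        have := hle (z i) (subset_convexHull ℝ S (hz i))
        linarith
    have hz' : ∀ i : ι, w i • z i = w i • v := by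
      intro i
      rcases eq_or_ne (w i) 0 with h0 | h0
      · rw [h0, zero_smul, zero_smul]
      · have ht := hterm i (Finset.mem_univ i)
        have hℓz : ℓ (z i) = ℓ v := by
          rcases mul_eq_zero.1 ht with h | h
          · exact absurd h h0
          · linarith
        rcases eq_or_ne (z i) v with rfl | hne
        · rfl
        · exact absurd hℓz (ne_of_lt (hmax _ (hz i) hne))
    rw [← hxsum]
    calc ∑ i, w i • z i = ∑ i, w i • v := by simp_rw [hz']
      _ = (∑ i, w i) • v := (Finset.sum_smul).symm
      _ = v := by rw [hw₁, one_smul]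
  rw [mem_extremePoints_iff_forall_segment]
  refine ⟨subset_convexHull ℝ S hv, fun x₁ h₁ x₂ h₂ hseg => ?_⟩
  obtain ⟨a, b, ha, hb, hab, hsum⟩ := hseg
  rcases eq_or_lt_of_le ha with ha0 | ha0
  · have hb1 : b = 1 := by linarith
    right
    apply heq x₂ h₂
    rw [← ha0, hb1] at hsum
    simp at hsum
    rw [hsum]
  rcases eq_or_lt_of_le hb with hb0 | hb0
  · have ha1 : a = 1 := by linarith
    left
    apply heq x₁ h₁
    rw [← hb0, ha1] at hsum
    simp at hsum
    rw [hsum]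
  have hl1 := hle x₁ h₁
  have hl2 := hle x₂ h₂
  have hv' : ℓ v = a * ℓ x₁ + b * ℓ x₂ := by
    rw [← hsum]; simp [smul_eq_mul]
  have hsum2 : a * ℓ v + b * ℓ v = ℓ v := by rw [← add_mul, hab, one_mul]
  have he1 : ℓ x₁ = ℓ v := by
    rcases lt_or_eq_of_le hl1 with hlt | heqq
    · exfalso
      have h1 : a * ℓ x₁ < a * ℓ v := mul_lt_mul_of_pos_left hlt ha0
      have h2 : b * ℓ x₂ ≤ b * ℓ v := mul_le_mul_of_nonneg_left hl2 hb
      linarith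
    · exact heqq
  exact Or.inl (heq x₁ h₁ he1)

/-- For `F₁, F₂ ⊆ [r]` with `F₁ ∪ F₂ = [r]`, the number of vertices (extreme points)
of the Minkowski sum `Δ_{F₁} + Δ_{F₂}` is `r₁r₂ + r₁r₃ + r₂r₃ + r₁`, where
`r₁ = |F₁ ∩ F₂|`, `r₂ = |F₁ \ F₂|`, `r₃ = |F₂ \ F₁|`. -/
theorem stmt7 (r : ℕ) (F1 F2 : Finset (Fin r)) (hcover : F1 ∪ F2 = Finset.univ) :
    (Set.extremePoints ℝ
        (convexHull ℝ ((fun i : Fin r => fun j : Fin r => if i = j then (1 : ℝ) else 0) '' ↑F1) +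
         convexHull ℝ ((fun i : Fin r => fun j : Fin r => if i = j then (1 : ℝ) else 0) '' ↑F2))).ncard
    = (F1 ∩ F2).card * (F1 \ F2).card + (F1 ∩ F2).card * (F2 \ F1).card +
        (F1 \ F2).card * (F2 \ F1).card + (F1 ∩ F2).card := by
  classical
  have he : (fun i : Fin r => fun j : Fin r => if i = j then (1 : ℝ) else 0) = stdv r := rfl
  rw [he]
  set g : Fin r × Fin r → Fin r → ℝ := fun p => stdv r p.1 + stdv r p.2 with hg
  set T : Finset (Fin r × Fin r) :=
    (F1 ×ˢ F2).filter (fun p => p.1 = p.2 ∨ p.1 ∉ F2 ∨ p.2 ∉ F1) with hT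
  have hS : convexHull ℝ (stdv r '' ↑F1) + convexHull ℝ (stdv r '' ↑F2)
      = convexHull ℝ ↑((F1 ×ˢ F2).image g) := by
    rw [← convexHull_add]
    congr 1
    rw [Finset.coe_image, Finset.coe_product]
    calc stdv r '' ↑F1 + stdv r '' ↑F2
        = Set.image2 (· + ·) (stdv r '' ↑F1) (stdv r '' ↑F2) := (Set.image2_add).symm
      _ = Set.image2 (fun a b => stdv r a + stdv r b) ↑F1 ↑F2 := by
          rw [Set.image2_image_left, Set.image2_image_right]
      _ = g '' (↑F1 ×ˢ ↑F2) := (Set.image_prod _).symm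
  rw [hS]
  have key : Set.extremePoints ℝ (convexHull ℝ ↑((F1 ×ˢ F2).image g)) = (↑(T.image g) : Set (Fin r → ℝ)) := by
    apply Set.Subset.antisymm
    · intro x hx
      have hxS := extremePoints_convexHull_subset hx
      rw [Finset.coe_image] at hxS
      obtain ⟨⟨a, b⟩, hab, rfl⟩ := hxS
      rw [Finset.mem_coe, Finset.mem_product] at hab
      by_cases hcond : a = b ∨ a ∉ F2 ∨ b ∉ F1
      · rw [Finset.coe_image]
        exact Set.mem_image_of_mem g (Finset.mem_coe.mpr
          (Finset.mem_filter.mpr ⟨Finset.mem_product.mpr hab, hcond⟩))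
      · push_neg at hcond
        obtain ⟨hne, haF2, hbF1⟩ := hcond
        exfalso
        rw [mem_extremePoints_iff_forall_segment] at hx
        have h1 : g (a, a) ∈ convexHull ℝ (↑((F1 ×ˢ F2).image g) : Set (Fin r → ℝ)) :=
          subset_convexHull ℝ _ (by
            rw [Finset.coe_image]
            exact Set.mem_image_of_mem g (by
              simp only [Finset.mem_coe, Finset.mem_product]; exact ⟨hab.1, haF2⟩))
        have h2 : g (b, b) ∈ convexHull ℝ (↑((F1 ×ˢ F2).image g) : Set (Fin r → ℝ)) :=
          subset_convexHull ℝ _ (by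
            rw [Finset.coe_image]
            exact Set.mem_image_of_mem g (by
              simp only [Finset.mem_coe, Finset.mem_product]; exact ⟨hbF1, hab.2⟩))
        have hseg : g (a, b) ∈ segment ℝ (g (a, a)) (g (b, b)) := by
          refine ⟨1/2, 1/2, by norm_num, by norm_num, by norm_num, ?_⟩
          simp only [hg]
          module
        rcases hx.2 _ h1 _ h2 hseg with h | h
        · rcases stdv_add_eq_iff.mp h with ⟨_, h'⟩ | ⟨h', _⟩
          · exact hne h'
          · exact hne h'
        · rcases stdv_add_eq_iff.mp h with ⟨h', _⟩ | ⟨_, h'⟩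
          · exact hne h'.symm
          · exact hne h'.symm
    · intro x hx
      rw [Finset.coe_image] at hx
      obtain ⟨⟨i, j⟩, hij, rfl⟩ := hx
      rw [Finset.mem_coe, hT, Finset.mem_filter, Finset.mem_product] at hij
      obtain ⟨⟨hi1, hj2⟩, hcond⟩ := hij
      dsimp only at hi1 hj2 hcond
      have hmem : g (i, j) ∈ (↑((F1 ×ˢ F2).image g) : Set (Fin r → ℝ)) := by
        rw [Finset.coe_image]
        exact Set.mem_image_of_mem g (by
          simp only [Finset.mem_coe, Finset.mem_product]; exact ⟨hi1, hj2⟩)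
      rcases hcond with hijeq | hiF2 | hjF1
      · -- i = j
        subst hijeq
        apply extreme_of_strict_max (LinearMap.proj i) hmem
        intro w hw hne
        rw [Finset.coe_image] at hw
        obtain ⟨⟨a, b⟩, hab, rfl⟩ := hw
        have hne' : ¬(a = i ∧ b = i) := by
          rintro ⟨rfl, rfl⟩; exact hne rfl
        simp only [hg, LinearMap.proj_apply, Pi.add_apply, stdv]
        by_cases ha : a = i
        · by_cases hb : b = i
          · exact absurd ⟨ha, hb⟩ hne'
          · norm_num [ha, hb]
        · by_cases hb : b = i <;> norm_num [ha, hb]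
      · -- i ∉ F2
        apply extreme_of_strict_max ((2 : ℝ) • LinearMap.proj i + LinearMap.proj j) hmem
        intro w hw hne
        rw [Finset.coe_image] at hw
        obtain ⟨⟨a, b⟩, hab, rfl⟩ := hw
        rw [Finset.mem_coe, Finset.mem_product] at hab
        have hijne : i ≠ j := fun h => hiF2 (h ▸ hj2)
        have hji : ¬ j = i := fun h => hijne h.symm
        have hbi : ¬ b = i := fun h => hiF2 (h ▸ hab.2)
        have hne' : ¬(a = i ∧ b = j) := by rintro ⟨rfl, rfl⟩; exact hne rfl
        simp only [hg, LinearMap.add_apply, LinearMap.smul_apply, LinearMap.proj_apply,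
          Pi.add_apply, stdv, smul_eq_mul]
        by_cases ha : a = i
        · have haj : ¬ a = j := fun h => hijne (ha ▸ h)
          have hbj : ¬ b = j := fun h => hne' ⟨ha, h⟩
          norm_num [ha, haj, hbj, hbi, hijne, hji]
        · by_cases haj : a = j <;> by_cases hbj : b = j <;>
            norm_num [ha, haj, hbj, hbi, hijne, hji]
      · -- j ∉ F1
        apply extreme_of_strict_max (LinearMap.proj i + (2 : ℝ) • LinearMap.proj j) hmem
        intro w hw hne
        rw [Finset.coe_image] at hw
        obtain ⟨⟨a, b⟩, hab, rfl⟩ := hw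
        rw [Finset.mem_coe, Finset.mem_product] at hab
        have hijne : i ≠ j := fun h => hjF1 (h ▸ hi1)
        have hji : ¬ j = i := fun h => hijne h.symm
        have haj : ¬ a = j := fun h => hjF1 (h ▸ hab.1)
        have hne' : ¬(a = i ∧ b = j) := by rintro ⟨rfl, rfl⟩; exact hne rfl
        simp only [hg, LinearMap.add_apply, LinearMap.smul_apply, LinearMap.proj_apply,
          Pi.add_apply, stdv, smul_eq_mul]
        by_cases hbj : b = j
        · have hbi : ¬ b = i := fun h => hijne (h ▸ hbj)
          have hai : ¬ a = i := fun h => hne' ⟨h, hbj⟩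
          norm_num [hai, haj, hbj, hbi, hijne, hji]
        · by_cases hai : a = i <;> by_cases hbi : b = i <;>
            norm_num [hai, haj, hbj, hbi, hijne, hji]
  rw [key, Set.ncard_coe_finset]
  have hinj : Set.InjOn g ↑T := by
    rintro ⟨a, b⟩ hp ⟨c, d⟩ hq h
    rw [Finset.mem_coe, hT, Finset.mem_filter, Finset.mem_product] at hp hq
    rcases stdv_add_eq_iff.mp h with ⟨rfl, rfl⟩ | ⟨rfl, rfl⟩
    · rfl
    · -- p = (a,b), q = (b,a); from hq : b ∈ F1 ∧ a ∈ F2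
      have hab : a = b := by
        rcases hp.2 with h' | h' | h'
        · exact h'
        · exact absurd hq.1.2 h'
        · exact absurd hq.1.1 h'
      rw [hab]
  rw [Finset.card_image_of_injOn hinj]
  -- cardinality count
  have hsplit : T = ((F1 \ F2) ×ˢ F2 ∪ (F1 ∩ F2) ×ˢ (F2 \ F1)) ∪
      (F1 ∩ F2).image (fun i => (i, i)) := by
    ext ⟨a, b⟩
    simp only [hT, Finset.mem_filter, Finset.mem_product, Finset.mem_union, Finset.mem_image,
      Finset.mem_sdiff, Finset.mem_inter, Prod.mk.injEq]
    constructor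
    · rintro ⟨⟨h1, h2⟩, h3⟩
      by_cases haf2 : a ∈ F2
      · by_cases hbf1 : b ∈ F1
        · have hab : a = b := by tauto
          exact Or.inr ⟨a, ⟨h1, haf2⟩, rfl, hab⟩
        · exact Or.inl (Or.inr ⟨⟨h1, haf2⟩, h2, hbf1⟩)
      · exact Or.inl (Or.inl ⟨⟨h1, haf2⟩, h2⟩)
    · rintro ((⟨⟨h1, h2⟩, h3⟩ | ⟨⟨h1, h2⟩, h3, h4⟩) | ⟨x, ⟨hx1, hx2⟩, rfl, rfl⟩)
      · exact ⟨⟨h1, h3⟩, Or.inr (Or.inl h2)⟩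
      · exact ⟨⟨h1, h3⟩, Or.inr (Or.inr h4)⟩
      · exact ⟨⟨hx1, hx2⟩, Or.inl rfl⟩
  have hd1 : Disjoint ((F1 \ F2) ×ˢ F2) ((F1 ∩ F2) ×ˢ (F2 \ F1)) := by
    rw [Finset.disjoint_left]
    rintro ⟨a, b⟩ h1 h2
    simp only [Finset.mem_product, Finset.mem_sdiff, Finset.mem_inter] at h1 h2
    exact h1.1.2 h2.1.2
  have hd2 : Disjoint ((F1 \ F2) ×ˢ F2 ∪ (F1 ∩ F2) ×ˢ (F2 \ F1))
      ((F1 ∩ F2).image (fun i => (i, i))) := by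
    rw [Finset.disjoint_left]
    rintro ⟨a, b⟩ h1 h2
    simp only [Finset.mem_union, Finset.mem_product, Finset.mem_sdiff, Finset.mem_inter,
      Finset.mem_image, Prod.mk.injEq] at h1 h2
    obtain ⟨x, ⟨hx1, hx2⟩, rfl, rfl⟩ := h2
    rcases h1 with ⟨⟨_, h⟩, _⟩ | ⟨_, _, h⟩
    · exact h hx2
    · exact h hx1
  rw [hsplit, Finset.card_union_of_disjoint hd2, Finset.card_union_of_disjoint hd1,
    Finset.card_product, Finset.card_product,
    Finset.card_image_of_injective _ (fun x y h => congrArg Prod.fst h)]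
  have hF2 : F2.card = (F2 \ F1).card + (F1 ∩ F2).card := by
    rw [Finset.inter_comm, ← Finset.card_sdiff_add_card_inter F2 F1]
  rw [hF2]
  ring
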